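/- arXiv:2604.06159 — 3 statements merged into one kernel-verified Lean document; each statement's English description precedes it below -/
import Mathlib

section
/- Let A ≥ 2, let π ∈ ℝ^A be a probability vector with π_i > 0 for all i, fix an index y, and write p = π_y. Let u ∈ ℝ^A satisfy u_y = c₊ and u_j = c₋ for all j ≠ y, with c₊ > c₋, and set λ = exp(c₊ − c₋). Define the target q by q_i = π_i · exp(u_i) / ∑_j π_j · exp(u_j). Then q − π = β · (e_y − π), where β = p(λ−1) / (1 − p + λp) and e_y is the one-hot vector at y. -/
theorem stmt_8 (A : ℕ) (hA : 2 ≤ A) (π : Fin A → ℝ)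
    (hπ_pos : ∀ i, 0 < π i) (hπ_sum : ∑ i, π i = 1)
    (y : Fin A) (p : ℝ) (hp : p = π y)
    (cHigh cLow : ℝ) (hc : cLow < cHigh)
    (u : Fin A → ℝ) (huy : u y = cHigh) (huj : ∀ j ≠ y, u j = cLow)
    (lam : ℝ) (hlam : lam = Real.exp (cHigh - cLow))
    (q : Fin A → ℝ)
    (hq : ∀ i, q i = π i * Real.exp (u i) / ∑ j, π j * Real.exp (u j)) :
    ∀ i, q i - π i
      = (p * (lam - 1) / (1 - p + lam * p)) * ((if i = y then 1 else 0) - π i) := by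
  have hpy : (0:ℝ) < p := hp ▸ hπ_pos y
  have hrest : ∑ j ∈ Finset.univ.erase y, π j = 1 - p := by
    have := Finset.sum_erase_add Finset.univ π (Finset.mem_univ y)
    rw [hπ_sum] at this; rw [hp]; linarith
  have hsum : ∑ j, π j * Real.exp (u j)
      = Real.exp cLow * (1 - p) + Real.exp cHigh * p := by
    rw [← Finset.sum_erase_add Finset.univ _ (Finset.mem_univ y), huy, ← hp]
    have : ∑ j ∈ Finset.univ.erase y, π j * Real.exp (u j)
        = ∑ j ∈ Finset.univ.erase y, π j * Real.exp cLow := by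
      apply Finset.sum_congr rfl
      intro j hj
      rw [huj j (Finset.ne_of_mem_erase hj)]
    rw [this, ← Finset.sum_mul, hrest]; ring
  have hlam1 : 1 < lam := by
    rw [hlam]
    have : (0:ℝ) < cHigh - cLow := by linarith
    calc (1:ℝ) = Real.exp 0 := (Real.exp_zero).symm
    _ < _ := Real.exp_lt_exp.mpr this
  have hlampos : (0:ℝ) < lam := by linarith
  have h1p : (0:ℝ) ≤ 1 - p := by
    have := hrest
    have hnn : 0 ≤ ∑ j ∈ Finset.univ.erase y, π j :=
      Finset.sum_nonneg fun j _ => (hπ_pos j).le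
    linarith
  have hD : (0:ℝ) < 1 - p + lam * p := by nlinarith
  have hEc : Real.exp cHigh = Real.exp cLow * lam := by
    rw [hlam, ← Real.exp_add]; ring_nf
  have hsum' : ∑ j, π j * Real.exp (u j) = Real.exp cLow * (1 - p + lam * p) := by
    rw [hsum, hEc]; ring
  have hepos : (0:ℝ) < Real.exp cLow := Real.exp_pos _
  intro i
  rw [hq i, hsum']
  by_cases hi : i = y
  · subst hi
    rw [if_pos rfl, huy, hEc, ← hp]
    field_simp
    ring
  · rw [if_neg hi, huj i hi]
    field_simp
    ring
end

section
/- Let A ≥ 2, let π ∈ ℝ^A be a probability vector with π_i > 0 for all i, fix an index j, write r = π_j, and let λ > 1. Define the target q by q_j = π_j / (λ(1 − π_j) + π_j) and q_i = λ·π_i / (λ(1 − π_j) + π_j) for every i ≠ j. Then q is a probability vector and q − π = γ(r) · (π − e_j), where γ(r) = r(λ−1) / (λ(1−r) + r) and e_j is the one-hot vector at j. -/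
theorem stmt_9 (A : ℕ) (hA : 2 ≤ A) (π : Fin A → ℝ)
    (hπ_pos : ∀ i, 0 < π i) (hπ_sum : ∑ i, π i = 1)
    (j : Fin A) (r : ℝ) (hr : r = π j) (lam : ℝ) (hlam : 1 < lam)
    (q : Fin A → ℝ)
    (hqj : q j = π j / (lam * (1 - π j) + π j))
    (hqi : ∀ i ≠ j, q i = lam * π i / (lam * (1 - π j) + π j)) :
    ((∀ i, 0 ≤ q i) ∧ ∑ i, q i = 1) ∧
    ∀ i, q i - π i
      = (r * (lam - 1) / (lam * (1 - r) + r)) * (π i - (if i = j then 1 else 0)) := by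
  have hlam0 : 0 < lam := lt_trans one_pos hlam
  -- π j < 1
  obtain ⟨k, hk⟩ : ∃ k : Fin A, k ≠ j := by
    haveI : Nontrivial (Fin A) := Fin.nontrivial_iff_two_le.mpr hA
    exact exists_ne j
  have hsum_split : π j + ∑ i ∈ Finset.univ.erase j, π i = 1 := by
    rw [← hπ_sum, Finset.add_sum_erase _ _ (Finset.mem_univ j)]
  have hpos_rest : 0 < ∑ i ∈ Finset.univ.erase j, π i :=
    Finset.sum_pos (fun i _ => hπ_pos i) ⟨k, Finset.mem_erase.mpr ⟨hk, Finset.mem_univ k⟩⟩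
  have hπj1 : π j < 1 := by linarith
  have hD : 0 < lam * (1 - π j) + π j := by
    have := hπ_pos j
    nlinarith
  constructor
  · constructor
    · intro i
      by_cases hij : i = j
      · rw [hij, hqj]; exact div_nonneg (hπ_pos j).le hD.le
      · rw [hqi i hij]
        exact div_nonneg (by nlinarith [hπ_pos i]) hD.le
    · have : ∑ i, q i = q j + ∑ i ∈ Finset.univ.erase j, q i := by
        rw [Finset.add_sum_erase _ _ (Finset.mem_univ j)]
      rw [this, hqj, Finset.sum_congr rfl
        (fun i hi => hqi i (Finset.mem_erase.mp hi).1)]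
      rw [← Finset.sum_div, ← Finset.mul_sum]
      have hrest : ∑ i ∈ Finset.univ.erase j, π i = 1 - π j := by linarith
      rw [hrest]
      field_simp
      ring
  · intro i
    subst hr
    by_cases hij : i = j
    · subst hij
      simp only [if_pos rfl, ↓reduceIte, hqj]
      field_simp
      ring
    · simp only [if_neg hij, hqi i hij]
      field_simp
      ring
end

section
/- Let A ≥ 2, let π ∈ ℝ^A be a probability vector over A actions, fix an index y with 0 < p := π_y < 1, and let σ_B = √(p(1−p)). Define the standardized advantages A(y) = (1−p)/σ_B and A(a) = −p/σ_B for a ≠ y. Then the exact population GRPO update ∑_a π(a) · A(a) · (e_a − π) equals √(p/(1−p)) · (e_y − π), where e_a denotes the one-hot vector at a. -/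
theorem stmt_11 (A : ℕ) (hA : 2 ≤ A) (π : Fin A → ℝ)
    (hπ_nonneg : ∀ i, 0 ≤ π i) (hπ_sum : ∑ i, π i = 1)
    (y : Fin A) (p : ℝ) (hp : p = π y) (hp0 : 0 < p) (hp1 : p < 1)
    (σB : ℝ) (hσB : σB = Real.sqrt (p * (1 - p)))
    (Adv : Fin A → ℝ)
    (hAdvy : Adv y = (1 - p) / σB)
    (hAdva : ∀ a ≠ y, Adv a = -p / σB) :
    ∀ i, ∑ a, π a * Adv a * ((if i = a then 1 else 0) - π i)
      = Real.sqrt (p / (1 - p)) * ((if i = y then 1 else 0) - π i) := by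
  have h1p : 0 < 1 - p := by linarith
  have hσpos : 0 < σB := by
    rw [hσB]; exact Real.sqrt_pos.mpr (by nlinarith)
  have hσne : σB ≠ 0 := ne_of_gt hσpos
  have hsqp : 0 < Real.sqrt p := Real.sqrt_pos.mpr hp0
  have hps : p / σB = Real.sqrt (p / (1 - p)) := by
    have hq : 0 < Real.sqrt (1 - p) := Real.sqrt_pos.mpr h1p
    have hms : Real.sqrt p * Real.sqrt p = p := Real.mul_self_sqrt hp0.le
    rw [hσB, Real.sqrt_div hp0.le, Real.sqrt_mul hp0.le,
      div_eq_div_iff (by positivity) hq.ne']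
    nlinarith [hms]
  have herase : ∑ a ∈ Finset.univ.erase y, π a = 1 - p := by
    have h := Finset.add_sum_erase Finset.univ π (Finset.mem_univ y)
    rw [hπ_sum] at h
    rw [hp]; linarith
  have hzero : ∑ a, π a * Adv a = 0 := by
    rw [← Finset.add_sum_erase _ _ (Finset.mem_univ y), hAdvy]
    have h2 : ∑ a ∈ Finset.univ.erase y, π a * Adv a
        = ∑ a ∈ Finset.univ.erase y, π a * (-p / σB) :=
      Finset.sum_congr rfl fun a ha => by rw [hAdva a (Finset.ne_of_mem_erase ha)]
    rw [h2, ← Finset.sum_mul, herase, ← hp]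
    field_simp
    ring
  intro i
  have hlhs : ∑ a, π a * Adv a * ((if i = a then 1 else 0) - π i)
      = π i * Adv i - (∑ a, π a * Adv a) * π i := by
    simp only [mul_sub, Finset.sum_sub_distrib, ← Finset.sum_mul, mul_ite, mul_one, mul_zero,
      Finset.sum_ite_eq, Finset.mem_univ, if_true]
  rw [hlhs, hzero, zero_mul, sub_zero, ← hps]
  by_cases hiy : i = y
  · subst hiy
    rw [hAdvy, if_pos rfl, ← hp]
    ring
  · rw [hAdva i hiy, if_neg hiy]
    ring
end
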